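/- Every subgroup of PGL(2,ℤ) of order 4 contains an element that is conjugate in PGL(2,ℤ) to [T]. -/

import Mathlib

open Matrix

abbrev GL2Z := GL (Fin 2) ℤ

/-- PGL(2,ℤ): the quotient of GL(2,ℤ) by its center {I, -I}. -/
abbrev PGL2Z := GL2Z ⧸ Subgroup.center GL2Z

/-- The image of a matrix in PGL(2,ℤ). -/
def cls (M : GL2Z) : PGL2Z := QuotientGroup.mk M

def Smat : GL2Z := ⟨!![0,1;1,0], !![0,1;1,0], by decide, by decide⟩
def Nmat : GL2Z := ⟨!![-1,0;0,1], !![-1,0;0,1], by decide, by decide⟩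
def Tmat : GL2Z := ⟨!![0,-1;1,0], !![0,1;-1,0], by decide, by decide⟩
def Umat : GL2Z := ⟨!![0,-1;1,1], !![1,1;-1,0], by decide, by decide⟩

lemma key_pos : ∀ n : ℕ, ∀ a b c : ℤ, a*a + b*c = -1 → 0 < c → c ≤ n →
    ∃ P : Matrix (Fin 2) (Fin 2) ℤ, IsUnit P.det ∧
      (P * !![a,b;c,-a] = !![0,-1;1,0] * P ∨ P * !![a,b;c,-a] = !![0,1;-1,0] * P) := by
  intro n
  induction n with
  | zero => intro a b c h hc hcn; exfalso; omega
  | succ n ih =>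
    intro a b c h hc hcn
    set t : ℤ := -(a / c) with ht
    have hmod : a + t*c = a % c := by rw [Int.emod_def]; ring
    have ha0 : 0 ≤ a + t*c := by rw [hmod]; exact Int.emod_nonneg a (by omega)
    have ha1 : a + t*c < c := by rw [hmod]; exact Int.emod_lt_of_pos a hc
    by_cases hc1 : c = 1
    · -- conjugate by !![1,t;0,1]
      subst hc1
      have ha : a + t = 0 := by omega
      refine ⟨!![1,t;0,1], by simp [Matrix.det_fin_two_of], Or.inl ?_⟩
      ext i j
      fin_cases i <;> fin_cases j <;>
        simp [Matrix.mul_apply, Fin.sum_univ_two] <;> first | linarith | linear_combination h - a * ha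
    · have hc2 : 2 ≤ c := by omega
      set a' : ℤ := a + t*c with ha'
      set b' : ℤ := b - t*(2*a + t*c) with hb'
      have hinv : (-a')*(-a') + (-c)*(-b') = -1 := by
        rw [ha', hb']; linear_combination h
      have hb'c : (-b')*c = 1 + a'*a' := by linear_combination -hinv
      have hb'pos : 0 < -b' := by nlinarith [hb'c, mul_self_nonneg a']
      have hsq : a'*a' ≤ (c-1)*(c-1) :=
        mul_le_mul (by omega) (by omega) ha0 (by omega)
      have hble : -b' ≤ c - 1 := by
        have h2 : (-b')*c ≤ (c-1)*c := by nlinarith [hb'c, hsq]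
        exact le_of_mul_le_mul_right h2 hc
      have hlt : -b' ≤ (n : ℤ) := by
        have hcn' : (c:ℤ) ≤ (n:ℤ) + 1 := by exact_mod_cast hcn
        omega
      obtain ⟨P', hPd, hP⟩ := ih (-a') (-c) (-b') hinv hb'pos (by exact_mod_cast hlt)
      simp only [neg_neg] at hP
      have hQ : !![(0:ℤ),-1;1,t] * !![a,b;c,-a] = !![-a',-c;-b',a'] * !![0,-1;1,t] := by
        ext i j
        fin_cases i <;> fin_cases j <;>
          simp [Matrix.mul_apply, Fin.sum_univ_two, ha', hb'] <;> ring
      refine ⟨P' * !![0,-1;1,t], ?_, ?_⟩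
      · rw [Matrix.det_mul]
        simpa [Matrix.det_fin_two_of] using hPd
      · rcases hP with hP | hP
        · left; rw [mul_assoc, hQ, ← mul_assoc, hP, mul_assoc]
        · right; rw [mul_assoc, hQ, ← mul_assoc, hP, mul_assoc]

lemma key_all (a b c : ℤ) (h : a*a + b*c = -1) :
    ∃ P : Matrix (Fin 2) (Fin 2) ℤ, IsUnit P.det ∧
      (P * !![a,b;c,-a] = !![0,-1;1,0] * P ∨ P * !![a,b;c,-a] = !![0,1;-1,0] * P) := by
  rcases lt_trichotomy c 0 with hc | hc | hc
  · obtain ⟨P, hPd, hP⟩ := key_pos (-c).toNat a (-b) (-c)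
      (by linear_combination h) (by omega) (by omega)
    have hN : !![(-1:ℤ),0;0,1] * !![a,b;c,-a] = !![a,-b;-c,-a] * !![-1,0;0,1] := by
      ext i j
      fin_cases i <;> fin_cases j <;>
        simp [Matrix.mul_apply, Fin.sum_univ_two]
    refine ⟨P * !![-1,0;0,1], ?_, ?_⟩
    · rw [Matrix.det_mul]
      have h1 : (!![(-1:ℤ),0;0,1]).det = -1 := by simp [Matrix.det_fin_two_of]
      rw [h1]
      exact hPd.mul (isUnit_one.neg)
    · rcases hP with hP | hP
      · left; rw [mul_assoc, hN, ← mul_assoc, hP, mul_assoc]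
      · right; rw [mul_assoc, hN, ← mul_assoc, hP, mul_assoc]
  · exfalso; subst hc; nlinarith [mul_self_nonneg a]
  · exact key_pos c.toNat a b c h hc (by omega)

lemma center_sub (z : GL2Z) (hz : z ∈ Subgroup.center GL2Z) : z = 1 ∨ z = -1 := by
  have hS := Subgroup.mem_center_iff.mp hz Smat
  have hE := Subgroup.mem_center_iff.mp hz
    (⟨!![1,1;0,1], !![1,-1;0,1], by decide, by decide⟩ : GL2Z)
  have hSv : !![(0:ℤ),1;1,0] * (z.val) = (z.val) * !![0,1;1,0] := by
    have := congrArg Units.val hS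
    simpa [Smat, Units.val_mul] using this
  have hEv : !![(1:ℤ),1;0,1] * (z.val) = (z.val) * !![1,1;0,1] := by
    have := congrArg Units.val hE
    simpa [Units.val_mul] using this
  have e1 := congrFun (congrFun hEv 0) 0
  have e2 := congrFun (congrFun hEv 0) 1
  have e3 := congrFun (congrFun hSv 0) 0
  simp [Matrix.mul_apply, Fin.sum_univ_two] at e1 e2 e3
  have h10 : z.val 1 0 = 0 := by linarith
  have h01 : z.val 0 1 = 0 := by linarith
  have h11 : z.val 1 1 = z.val 0 0 := by linarith
  have hdet : IsUnit (z.val).det := (Matrix.isUnit_iff_isUnit_det _).mp z.isUnit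
  rw [Matrix.det_fin_two, h10, h01, h11] at hdet
  have hdet' : z.val 0 0 * z.val 0 0 = 1 ∨ z.val 0 0 * z.val 0 0 = -1 := by
    simpa using Int.isUnit_iff.mp hdet
  have hpm : z.val 0 0 = 1 ∨ z.val 0 0 = -1 := by
    rcases hdet' with h' | h'
    · exact Int.isUnit_iff.mp (IsUnit.of_mul_eq_one _ h')
    · exfalso; nlinarith [mul_self_nonneg (z.val 0 0)]
  rcases hpm with h00 | h00
  · left
    ext i j
    fin_cases i <;> fin_cases j <;>
      simp [Matrix.one_apply] <;> linarith [h00, h01, h10, h11]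
  · right
    ext i j
    fin_cases i <;> fin_cases j <;>
      simp [Matrix.one_apply] <;> linarith [h00, h01, h10, h11]

lemma neg_one_center : (-1 : GL2Z) ∈ Subgroup.center GL2Z := by
  rw [Subgroup.mem_center_iff]
  intro g
  simp [mul_neg, neg_mul]

/-- determinant as a hom on PGL2Z -/
noncomputable def detPGL : PGL2Z →* ℤˣ :=
  QuotientGroup.lift (Subgroup.center GL2Z) (Matrix.GeneralLinearGroup.det) (by
    intro z hz
    rcases center_sub z hz with rfl | rfl
    · simp
    · apply Units.ext
      show ((-1 : GL2Z).val).det = 1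
      rw [Units.val_neg, Units.val_one]
      simp [Matrix.det_neg])

lemma exists_order_two (H : Subgroup PGL2Z) (hH : Nat.card H = 4) :
    ∃ g : PGL2Z, g ∈ H ∧ g ≠ 1 ∧ g * g = 1 ∧ detPGL g = 1 := by
  have hfin : Finite H := Nat.finite_of_card_ne_zero (by omega)
  set φ : H →* ℤˣ := detPGL.comp H.subtype with hφ
  have hcard : Nat.card (H ⧸ φ.ker) * Nat.card φ.ker = 4 := by
    rw [← hH]; exact (Subgroup.card_eq_card_quotient_mul_card_subgroup _).symm
  have hq : Nat.card (H ⧸ φ.ker) ∣ 2 := by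
    have h1 : Nat.card (H ⧸ φ.ker) = Nat.card φ.range :=
      Nat.card_congr (QuotientGroup.quotientKerEquivRange φ).toEquiv
    have h2 : Nat.card φ.range ∣ Nat.card ℤˣ := Subgroup.card_subgroup_dvd_card _
    have h3 : Nat.card ℤˣ = 2 := by
      rw [Nat.card_eq_fintype_card]; rfl
    have h2' : Nat.card φ.range ∣ 2 := by rwa [h3] at h2
    rw [h1]; exact h2'
  have hker : 2 ∣ Nat.card φ.ker := by
    rcases (Nat.dvd_prime Nat.prime_two).mp hq with h' | h' <;> rw [h'] at hcard <;> omega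
  obtain ⟨x, hx⟩ := exists_prime_orderOf_dvd_card' (G := φ.ker) 2 hker
  refine ⟨((x : H) : PGL2Z), (x : H).2, ?_, ?_, ?_⟩
  · intro hgone
    have : (x : H) = 1 := Subtype.ext hgone
    have : x = 1 := Subtype.ext (by simp [this])
    rw [this] at hx
    simp at hx
  · have hx2 : x ^ 2 = 1 := orderOf_dvd_iff_pow_eq_one.mp (by rw [hx])
    have : ((x : H) : PGL2Z) ^ 2 = 1 := by
      have : ((x ^ 2 : φ.ker) : H) = 1 := by rw [hx2]; rfl
      have h2 : ((x : H) : PGL2Z) ^ 2 = (((x ^ 2 : φ.ker) : H) : PGL2Z) := by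
        push_cast [SubgroupClass.coe_pow]; rfl
      rw [h2, this]; rfl
    rw [← pow_two]; exact this
  · have := x.2
    rw [MonoidHom.mem_ker] at this
    simpa [hφ] using this

lemma mk_neg_one : (QuotientGroup.mk (-1 : GL2Z) : PGL2Z) = 1 :=
  (QuotientGroup.eq_one_iff _).mpr neg_one_center

lemma mk_neg (u : GL2Z) : (QuotientGroup.mk (-u : GL2Z) : PGL2Z) = QuotientGroup.mk u := by
  have h : (-u : GL2Z) = u * (-1) := by
    apply Units.ext; simp
  rw [h, QuotientGroup.mk_mul, mk_neg_one, mul_one]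

set_option maxHeartbeats 1000000 in
/-- Every subgroup of PGL(2,ℤ) of order 4 contains an element conjugate to [T]. -/
theorem stmt_18 (H : Subgroup PGL2Z) (hH : Nat.card H = 4) :
    ∃ h ∈ H, IsConj h (cls Tmat) := by
  obtain ⟨g, hgH, hg1, hg2, hgdet⟩ := exists_order_two H hH
  obtain ⟨Mu, rfl⟩ := QuotientGroup.mk_surjective g
  have hcen : Mu * Mu ∈ Subgroup.center GL2Z := by
    rw [← QuotientGroup.mk_mul] at hg2
    exact (QuotientGroup.eq_one_iff _).mp hg2
  have hMune : Mu ∉ Subgroup.center GL2Z := by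
    intro hmem
    exact hg1 ((QuotientGroup.eq_one_iff _).mpr hmem)
  have hdet1 : (Mu.val).det = 1 := by
    have h1 : detPGL (QuotientGroup.mk Mu) = Matrix.GeneralLinearGroup.det Mu :=
      QuotientGroup.lift_mk _ _ _
    rw [h1] at hgdet
    have := congrArg Units.val hgdet
    simpa using this
  set A := Mu.val with hA
  set p := A 0 0 with hp
  set q := A 0 1 with hq
  set r := A 1 0 with hr
  set sE := A 1 1 with hs
  have hdet' : p * sE - q * r = 1 := by
    rw [← Matrix.det_fin_two]; exact hdet1
  rcases center_sub _ hcen with h | h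
  · -- Mu * Mu = 1 : impossible since Mu ∉ center
    exfalso
    have hAA : A * A = 1 := by
      have := congrArg Units.val h
      simpa [Units.val_mul] using this
    have e00 := congrFun (congrFun hAA 0) 0
    have e01 := congrFun (congrFun hAA 0) 1
    have e10 := congrFun (congrFun hAA 1) 0
    have e11 := congrFun (congrFun hAA 1) 1
    simp [Matrix.mul_apply, Fin.sum_univ_two, Matrix.one_apply, ← hp, ← hq, ← hr, ← hs] at e00 e01 e10 e11
    have hu : (p + sE) * (p + sE) = 4 := by linear_combination e00 + e11 + 2 * hdet'
    have hune : p + sE ≠ 0 := by intro h0; rw [h0] at hu; norm_num at hu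
    have hq0 : q = 0 := by
      rcases mul_eq_zero.mp (show q * (p + sE) = 0 by linear_combination e01) with h' | h'
      · exact h'
      · exact absurd h' hune
    have hr0 : r = 0 := by
      rcases mul_eq_zero.mp (show r * (p + sE) = 0 by linear_combination e10) with h' | h'
      · exact h'
      · exact absurd h' hune
    have hp2 : p * p = 1 := by linear_combination e00 - r * hq0
    have hps : p * sE = 1 := by linear_combination hdet' + q * hr0
    rcases Int.isUnit_iff.mp (IsUnit.of_mul_eq_one _ hp2) with hp1 | hp1
    · have hs1 : sE = 1 := by nlinarith [hps, hp1]
      apply hMune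
      have : Mu = 1 := by
        apply Units.ext
        show A = 1
        ext i j
        fin_cases i <;> fin_cases j <;>
          simp [Matrix.one_apply] <;> linarith [hp1, hq0, hr0, hs1]
      rw [this]; exact Subgroup.one_mem _
    · have hs1 : sE = -1 := by nlinarith [hps, hp1]
      apply hMune
      have : Mu = -1 := by
        apply Units.ext
        rw [Units.val_neg, Units.val_one]
        show A = -1
        ext i j
        fin_cases i <;> fin_cases j <;>
          simp [Matrix.neg_apply, Matrix.one_apply] <;> linarith [hp1, hq0, hr0, hs1]
      rw [this]; exact neg_one_center
  · -- Mu * Mu = -1 : trace zero, conjugate to T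
    have hAA : A * A = -1 := by
      have := congrArg Units.val h
      simpa [Units.val_mul] using this
    have e00 := congrFun (congrFun hAA 0) 0
    have e01 := congrFun (congrFun hAA 0) 1
    have e10 := congrFun (congrFun hAA 1) 0
    have e11 := congrFun (congrFun hAA 1) 1
    simp [Matrix.mul_apply, Fin.sum_univ_two, Matrix.one_apply, Matrix.neg_apply, ← hp, ← hq, ← hr, ← hs] at e00 e01 e10 e11
    have hu : (p + sE) * (p + sE) = 0 := by linear_combination e00 + e11 + 2 * hdet'
    have hu0 : sE = -p := by have := mul_self_eq_zero.mp hu; linarith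
    have hAeq : A = !![p, q; r, -p] := by
      rw [Matrix.eta_fin_two A, ← hp, ← hq, ← hr, ← hs, hu0]
    have he : p * p + q * r = -1 := by linear_combination e00
    obtain ⟨P, hPd, hP⟩ := key_all p q r he
    have hPu : IsUnit P := (Matrix.isUnit_iff_isUnit_det P).mpr hPd
    set Pu := hPu.unit with hPuDef
    have hPuv : Pu.val = P := hPu.unit_spec
    refine ⟨QuotientGroup.mk Mu, hgH, ?_⟩
    rw [isConj_iff]
    refine ⟨QuotientGroup.mk Pu, ?_⟩
    rw [mul_inv_eq_iff_eq_mul]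
    rcases hP with hP | hP
    · have hu1 : Pu * Mu = Tmat * Pu := by
        apply Units.ext
        rw [Units.val_mul, Units.val_mul, hPuv]
        show P * A = Tmat.val * P
        rw [hAeq]
        exact hP
      rw [← QuotientGroup.mk_mul, hu1, QuotientGroup.mk_mul]
      rfl
    · have hu1 : Pu * Mu = (-Tmat) * Pu := by
        apply Units.ext
        rw [Units.val_mul, Units.val_mul, hPuv]
        show P * A = (-Tmat).val * P
        rw [hAeq]
        have hneg : ((-Tmat : GL2Z) : Matrix (Fin 2) (Fin 2) ℤ) = !![0,1;-1,0] := by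
          rw [Units.val_neg]
          show -Tmat.val = _
          have : Tmat.val = !![0,-1;1,0] := rfl
          rw [this]
          ext i j
          fin_cases i <;> fin_cases j <;> simp
        rw [hneg]
        exact hP
      rw [← QuotientGroup.mk_mul, hu1, QuotientGroup.mk_mul, mk_neg]
      rfl
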